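/- Let (E,Y_E,D) be a D-ertex algebra and let V = E ⊕ ℂ be the vertex algebra with products (u,a)_n (v,b) = (u_n v + b·c_n(u) + a·δ_{n,−1} v, a·b·δ_{n,−1}) and vacuum 1 = (0,1), and let i : E → V be the embedding i(u) = (u,0). Then for every vertex algebra (W,Y_W,1_W), regarded as a D-ertex algebra via its derivative operator 𝒟_W(v) = v_{−2} 1_W, and every D-ertex algebra homomorphism ψ : E → W, there exists a unique vertex algebra homomorphism φ : V → W such that φ(i(u)) = ψ(u) for all u ∈ E. -/
import Mathlib


noncomputable section

/-- Generalized binomial coefficient `m(m-1)⋯(m-i+1)/i!` in `ℚ`, for `m : ℤ`, `i : ℕ`. -/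
def qbinom (m : ℤ) (i : ℕ) : ℚ :=
  (∏ j ∈ Finset.range i, ((m : ℚ) - (j : ℚ))) / (Nat.factorial i : ℚ)

/-- The data of bilinear products `uₙv` (for `n : ℤ`) on a `ℂ`-vector space `V` forms an
ertex algebra: bilinearity, truncation, and the Jacobi identity in Borcherds component form,
where the (finite by truncation) sums are formalized as `finsum`s. -/
structure IsErtex {V : Type} [AddCommGroup V] [Module ℂ V]
    (mul : ℤ → V → V → V) : Prop where
  add_left : ∀ (n : ℤ) (u u' v : V), mul n (u + u') v = mul n u v + mul n u' v
  smul_left : ∀ (n : ℤ) (c : ℂ) (u v : V), mul n (c • u) v = c • mul n u v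
  add_right : ∀ (n : ℤ) (u v v' : V), mul n u (v + v') = mul n u v + mul n u v'
  smul_right : ∀ (n : ℤ) (c : ℂ) (u v : V), mul n u (c • v) = c • mul n u v
  trunc : ∀ u v : V, ∃ N : ℤ, ∀ n : ℤ, N ≤ n → mul n u v = 0
  jacobi : ∀ (u v w : V) (p q r : ℤ),
    (∑ᶠ i : ℕ, (qbinom p i : ℂ) • mul (p + q - (i : ℤ)) (mul (r + (i : ℤ)) u v) w) =
    ∑ᶠ i : ℕ, ((-1 : ℂ) ^ (i : ℕ) * (qbinom r i : ℂ)) •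
      (mul (p + r - (i : ℤ)) u (mul (q + (i : ℤ)) v w)
        - ((-1 : ℂ) ^ r) • mul (q + r - (i : ℤ)) v (mul (p + (i : ℤ)) u w))

/-- A (bundled) ertex algebra. -/
structure ErtexAlgebra where
  carrier : Type
  [addCommGroup : AddCommGroup carrier]
  [module : Module ℂ carrier]
  mul : ℤ → carrier → carrier → carrier
  isErtex : IsErtex mul

attribute [instance] ErtexAlgebra.addCommGroup ErtexAlgebra.module

/-- An ertex algebra (given by its products) is injective if `uₙv = 0` for all `n, v`
implies `u = 0`. -/
def ErtexInjectiveFun {V : Type} [AddCommGroup V] [Module ℂ V]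
    (mul : ℤ → V → V → V) : Prop :=
  ∀ u : V, (∀ (n : ℤ) (v : V), mul n u v = 0) → u = 0

/-- `f` intertwines the products `mulV` and `mulW` (ertex algebra homomorphism property). -/
def IsMulHomFun {V W : Type} [AddCommGroup V] [Module ℂ V] [AddCommGroup W] [Module ℂ W]
    (mulV : ℤ → V → V → V) (mulW : ℤ → W → W → W) (f : V →ₗ[ℂ] W) : Prop :=
  ∀ (n : ℤ) (u v : V), f (mulV n u v) = mulW n (f u) (f v)

/-- Vacuum and creation properties for the vector `one`. -/
structure IsVacuum {V : Type} [AddCommGroup V] [Module ℂ V]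
    (mul : ℤ → V → V → V) (one : V) : Prop where
  vac_minus_one : ∀ v : V, mul (-1) one v = v
  vac_ne : ∀ n : ℤ, n ≠ -1 → ∀ v : V, mul n one v = 0
  create_minus_one : ∀ u : V, mul (-1) u one = u
  create_nonneg : ∀ n : ℤ, 0 ≤ n → ∀ u : V, mul n u one = 0

/-- A (bundled) vertex algebra: an ertex algebra with a vacuum vector. -/
structure VertexAlgebra extends ErtexAlgebra where
  vac : carrier
  isVacuum : IsVacuum mul vac

/-- The `D`-derivative property: `(Du)ₙ v = -n · u_{n-1} v`. -/
def IsDDeriv {V : Type} [AddCommGroup V] [Module ℂ V]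
    (mul : ℤ → V → V → V) (D : V → V) : Prop :=
  ∀ (n : ℤ) (u v : V), mul n (D u) v = ((-n : ℤ) : ℂ) • mul (n - 1) u v

/-- The `D`-bracket derivative formula: `D(uₙv) = (Du)ₙv + uₙ(Dv)`. -/
def IsDBracket {V : Type} [AddCommGroup V] [Module ℂ V]
    (mul : ℤ → V → V → V) (D : V → V) : Prop :=
  ∀ (n : ℤ) (u v : V), D (mul n u v) = mul n (D u) v + mul n u (D v)

/-- Skew-symmetry: `uₙv = ∑_{i≥0} (-1)^{n+1+i} (1/i!) Dⁱ(v_{n+i}u)` (sum finite by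
truncation, formalized as a `finsum`). -/
def IsSkew {V : Type} [AddCommGroup V] [Module ℂ V]
    (mul : ℤ → V → V → V) (D : V → V) : Prop :=
  ∀ (n : ℤ) (u v : V), mul n u v =
    ∑ᶠ i : ℕ, ((-1 : ℂ) ^ (n + 1 + (i : ℤ)) * ((Nat.factorial i : ℂ))⁻¹) •
      D^[i] (mul (n + (i : ℤ)) v u)

/-- The three defining properties of a `D`-ertex algebra structure. -/
def IsDStructure {V : Type} [AddCommGroup V] [Module ℂ V]
    (mul : ℤ → V → V → V) (D : V → V) : Prop :=
  IsDDeriv mul D ∧ IsDBracket mul D ∧ IsSkew mul D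

/-- A (bundled) `D`-ertex algebra. -/
structure DErtexAlgebra extends ErtexAlgebra where
  D : carrier →ₗ[ℂ] carrier
  isD : IsDStructure mul ⇑D

/-- `cₙ(u) = (1/(-n-1)!) D^{-n-1} u` for `n ≤ -1`, and `0` for `n ≥ 0`. -/
def DErtexAlgebra.cfun (E : DErtexAlgebra) (n : ℤ) (u : E.carrier) : E.carrier :=
  if n ≤ -1 then ((Nat.factorial (-n - 1).toNat : ℂ))⁻¹ • (⇑E.D)^[(-n - 1).toNat] u else 0

/-- The products on `E ⊕ ℂ`:
`(u,a)ₙ(v,b) = (uₙv + b·cₙ(u) + a·δ_{n,-1}·v, a·b·δ_{n,-1})`. -/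
def DErtexAlgebra.extMul (E : DErtexAlgebra) :
    ℤ → E.carrier × ℂ → E.carrier × ℂ → E.carrier × ℂ :=
  fun n p q =>
    (E.mul n p.1 q.1 + q.2 • E.cfun n p.1 + (if n = -1 then p.2 • q.1 else 0),
      if n = -1 then p.2 * q.2 else 0)

/-- The adjoined vacuum vector `1 = (0,1)` in `E ⊕ ℂ`. -/
def DErtexAlgebra.extVac (E : DErtexAlgebra) : E.carrier × ℂ := (0, 1)

/-- The linear span of `{Dⁿ(ψ u) : n ≥ 0, u ∈ E}` inside a `D`-ertex algebra. -/
def DSpan (E : ErtexAlgebra) (F : DErtexAlgebra) (ψ : E.carrier →ₗ[ℂ] F.carrier) :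
    Submodule ℂ F.carrier :=
  Submodule.span ℂ {x | ∃ (n : ℕ) (u : E.carrier), x = (⇑F.D)^[n] (ψ u)}

/-- `ψ : E → F` is a `D`-injective ertex algebra homomorphism into the `D`-ertex algebra
`F`: it is an ertex homomorphism and the span of `{Dⁿ(ψ u)}` is an injective ertex algebra. -/
def IsDInjectiveHom (E : ErtexAlgebra) (F : DErtexAlgebra)
    (ψ : E.carrier →ₗ[ℂ] F.carrier) : Prop :=
  IsMulHomFun E.mul F.mul ψ ∧
    ∀ w : F.carrier, w ∈ DSpan E F ψ →
      (∀ n : ℤ, ∀ v ∈ DSpan E F ψ, F.mul n w v = 0) → w = 0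

/-- The linear span of `{𝒟ⁿ(ψ u) : n ≥ 0, u ∈ E}` inside a vertex algebra, where
`𝒟(v) = v₋₂1` is the derivative operator. -/
def VDSpan (E : ErtexAlgebra) (W : VertexAlgebra) (ψ : E.carrier →ₗ[ℂ] W.carrier) :
    Submodule ℂ W.carrier :=
  Submodule.span ℂ {x | ∃ (n : ℕ) (u : E.carrier), x = (fun v => W.mul (-2) v W.vac)^[n] (ψ u)}

/-- `ψ : E → W` is a `D`-injective ertex algebra homomorphism into the vertex algebra `W`
regarded as a `D`-ertex algebra via `𝒟(v) = v₋₂1`. -/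
def IsVDInjectiveHom (E : ErtexAlgebra) (W : VertexAlgebra)
    (ψ : E.carrier →ₗ[ℂ] W.carrier) : Prop :=
  IsMulHomFun E.mul W.mul ψ ∧
    ∀ w : W.carrier, w ∈ VDSpan E W ψ →
      (∀ n : ℤ, ∀ v ∈ VDSpan E W ψ, W.mul n w v = 0) → w = 0


section Aux

variable (W : VertexAlgebra)

lemma aux_mul_zero_right (n : ℤ) (u : W.carrier) : W.mul n u 0 = 0 := by
  have h := W.isErtex.smul_right n 0 u 0
  simpa using h

lemma aux_qbinom_zero_of_ne {i : ℕ} (hi : i ≠ 0) : qbinom 0 i = 0 := by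
  unfold qbinom
  rw [Finset.prod_eq_zero (Finset.mem_range.mpr (Nat.pos_of_ne_zero hi)) (by simp)]
  simp

lemma aux_qbinom_zero (m : ℤ) : qbinom m 0 = 1 := by simp [qbinom]

lemma aux_qbinom_one (m : ℤ) : qbinom m 1 = m := by simp [qbinom]

lemma aux_keyJ (u : W.carrier) (k : ℕ) :
    W.mul (-2) (W.mul (-1 - (k : ℤ)) u W.vac) W.vac
      = ((k : ℂ) + 1) • W.mul (-2 - (k : ℤ)) u W.vac := by
  have hJ := W.isErtex.jacobi u W.vac W.vac 0 (-2) (-1 - (k : ℤ))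
  rw [finsum_eq_single _ 0 (by
    intro i hi
    rw [aux_qbinom_zero_of_ne hi]
    simp)] at hJ
  rw [finsum_eq_single _ 1 (by
    intro i hi
    have h1 : W.mul (-2 + (i : ℤ)) W.vac W.vac = 0 := by
      apply W.isVacuum.vac_ne
      omega
    have h2 : W.mul (-2 + (-1 - (k : ℤ)) - (i : ℤ)) W.vac (W.mul (0 + (i : ℤ)) u W.vac) = 0 := by
      apply W.isVacuum.vac_ne
      omega
    rw [h1, h2, aux_mul_zero_right]
    simp)] at hJ
  have e1 : (0 : ℤ) + -2 - ((0 : ℕ) : ℤ) = -2 := by norm_num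
  have e2 : (-1 - (k : ℤ)) + ((0 : ℕ) : ℤ) = -1 - (k : ℤ) := by norm_num
  have e3 : (0 : ℤ) + (-1 - (k : ℤ)) - ((1 : ℕ) : ℤ) = -2 - (k : ℤ) := by push_cast; ring
  have e4 : (-2 : ℤ) + ((1 : ℕ) : ℤ) = -1 := by norm_num
  have h5 : W.mul (-2 + (-1 - (k : ℤ)) - ((1 : ℕ) : ℤ)) W.vac (W.mul (0 + ((1 : ℕ) : ℤ)) u W.vac) = 0 := by
    apply W.isVacuum.vac_ne
    omega
  rw [e1, e2, e3, e4, h5, W.isVacuum.vac_minus_one, aux_qbinom_zero, aux_qbinom_one] at hJ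
  push_cast at hJ
  rw [one_smul, smul_zero, sub_zero] at hJ
  rw [hJ]
  congr 1
  ring

lemma aux_iterD (u : W.carrier) (k : ℕ) :
    (fun v => W.mul (-2) v W.vac)^[k] u
      = ((Nat.factorial k : ℂ)) • W.mul (-1 - (k : ℤ)) u W.vac := by
  induction k with
  | zero =>
    simp [W.isVacuum.create_minus_one u]
  | succ k ih =>
    rw [Function.iterate_succ_apply', ih]
    show W.mul (-2) ((Nat.factorial k : ℂ) • W.mul (-1 - (k : ℤ)) u W.vac) W.vac = _
    rw [W.isErtex.smul_left, aux_keyJ, smul_smul]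
    have e : (-2 : ℤ) - (k : ℤ) = -1 - ((k + 1 : ℕ) : ℤ) := by push_cast; ring
    rw [e]
    congr 1
    push_cast [Nat.factorial_succ]
    ring

end Aux

/-- universal property of `V = E ⊕ ℂ` with embedding `i(u) = (u,0)`: any
`D`-ertex algebra homomorphism `ψ` from `E` into a vertex algebra `W` (regarded as a
`D`-ertex algebra via `𝒟_W(v) = v₋₂1_W`) factors through a unique vertex algebra
homomorphism `φ : V → W` with `φ ∘ i = ψ`. -/
theorem stmt_12 (E : DErtexAlgebra) (W : VertexAlgebra)
    (ψ : E.carrier →ₗ[ℂ] W.carrier) (hψ : IsMulHomFun E.mul W.mul ψ)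
    (hψD : ∀ v : E.carrier, ψ (E.D v) = W.mul (-2) (ψ v) W.vac) :
    ∃! φ : (E.carrier × ℂ) →ₗ[ℂ] W.carrier,
      (IsMulHomFun E.extMul W.mul φ ∧ φ E.extVac = W.vac) ∧
        ∀ u : E.carrier, φ (u, 0) = ψ u := by
  -- ψ commutes with iterates of the derivative operators
  have hiter : ∀ (k : ℕ) (u : E.carrier),
      ψ ((⇑E.D)^[k] u) = (fun v => W.mul (-2) v W.vac)^[k] (ψ u) := by
    intro k
    induction k with
    | zero => intro u; simp
    | succ k ih =>
      intro u
      rw [Function.iterate_succ_apply', Function.iterate_succ_apply', ← ih, hψD]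
  have hc : ∀ (n : ℤ) (u : E.carrier), ψ (E.cfun n u) = W.mul n (ψ u) W.vac := by
    intro n u
    by_cases hn : n ≤ -1
    · have hk : ((-n - 1).toNat : ℤ) = -n - 1 := by omega
      rw [DErtexAlgebra.cfun, if_pos hn, map_smul, hiter, aux_iterD, smul_smul,
        inv_mul_cancel₀ (by exact_mod_cast Nat.factorial_ne_zero _), one_smul]
      congr 1
      omega
    · rw [DErtexAlgebra.cfun, if_neg hn, map_zero,
        W.isVacuum.create_nonneg n (by omega) (ψ u)]
  have hv : ∀ (n : ℤ) (x : W.carrier), W.mul n W.vac x = if n = -1 then x else 0 := by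
    intro n x
    split
    · next h => rw [h]; exact W.isVacuum.vac_minus_one x
    · next h => exact W.isVacuum.vac_ne n h x
  have expand : ∀ (n : ℤ) (x y : W.carrier) (c d : ℂ),
      W.mul n (x + c • W.vac) (y + d • W.vac)
        = W.mul n x y + d • W.mul n x W.vac
          + (if n = -1 then c • y + (c * d) • W.vac else 0) := by
    intro n x y c d
    rw [W.isErtex.add_left, W.isErtex.add_right, W.isErtex.add_right,
        W.isErtex.smul_left, W.isErtex.smul_left, W.isErtex.smul_right, W.isErtex.smul_right,
        hv, hv]
    split
    · rw [smul_smul]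
    · simp
  refine ⟨{ toFun := fun p => ψ p.1 + p.2 • W.vac,
            map_add' := by intro p q; simp [add_smul]; abel,
            map_smul' := by intro c p; simp [mul_smul, smul_add] }, ⟨⟨?_, ?_⟩, ?_⟩, ?_⟩
  · intro n p q
    show ψ ((E.extMul n p q).1) + (E.extMul n p q).2 • W.vac = _
    simp only [LinearMap.coe_mk, AddHom.coe_mk]
    rw [expand]
    simp only [DErtexAlgebra.extMul]
    by_cases hn : n = -1
    · simp only [if_pos hn]
      rw [map_add, map_add, map_smul, map_smul, hψ, hc]
      abel
    · simp only [if_neg hn, add_zero, zero_smul]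
      rw [map_add, map_smul, hψ, hc]
  · show ψ (0 : E.carrier) + (1 : ℂ) • W.vac = W.vac
    simp
  · intro u
    show ψ u + (0 : ℂ) • W.vac = ψ u
    simp
  · rintro φ' ⟨⟨hm, hvac⟩, hcomm⟩
    apply LinearMap.ext
    intro p
    have hp : p = ((p.1, 0) : E.carrier × ℂ) + p.2 • ((0, 1) : E.carrier × ℂ) := by
      ext <;> simp
    conv_lhs => rw [hp]
    rw [map_add, map_smul, hcomm]
    have h01 : ((0, 1) : E.carrier × ℂ) = E.extVac := rfl
    rw [h01, hvac]
    rfl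


end
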